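/- Let $p$ be a prime, $V$ an abelian group, and $(K_n)_{n \in \mathbb{N}}$ a decreasing sequence of $\mathbb{F}_p$-subspaces of the $\mathbb{F}_p$-vector space $W = \mathrm{Hom}_{\mathbb{Z}}(\mathbb{Z}/p, V)$. If every linear form $W \to \mathbb{F}_p$ vanishes on $K_n$ for some $n$ (depending on the form), then $K_n = 0$ for some $n$. -/

import Mathlib

/-- If every linear form on an `𝔽p`-vector space `W` vanishes on some term of a
decreasing chain `(K n)` of subspaces, then the chain reaches `0`. -/
theorem stmt2 (p : ℕ) [Fact p.Prime] (W : Type*) [AddCommGroup W] [Module (ZMod p) W]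
    (K : ℕ → Submodule (ZMod p) W) (hdec : ∀ m n : ℕ, m ≤ n → K n ≤ K m)
    (h : ∀ lam : W →ₗ[ZMod p] ZMod p, ∃ n, ∀ x ∈ K n, lam x = 0) :
    ∃ n, K n = ⊥ := by
  by_cases hfin : ∃ n, FiniteDimensional (ZMod p) (K n)
  · -- Case 1: some `K N` is finite dimensional; the chain stabilizes.
    obtain ⟨N, hN⟩ := hfin
    -- dimensions of K (N+n) form an antitone sequence of naturals; take the minimum
    set g : ℕ → ℕ := fun n => Module.finrank (ZMod p) (K (N + n)) with hg
    have hne : (Set.range g).Nonempty := ⟨g 0, ⟨0, rfl⟩⟩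
    obtain ⟨M, hM⟩ := Nat.sInf_mem hne
    have hmin : ∀ n, sInf (Set.range g) ≤ g n := fun n => Nat.sInf_le ⟨n, rfl⟩
    -- all K (N + n) for n ≥ M are equal to K (N + M)
    have hstab : ∀ n, M ≤ n → K (N + n) = K (N + M) := by
      intro n hn
      haveI : FiniteDimensional (ZMod p) (K (N + M)) :=
        Submodule.finiteDimensional_of_le (hdec N (N + M) (Nat.le_add_right _ _))
      refine Submodule.eq_of_le_of_finrank_eq (hdec _ _ (by omega)) ?_
      have h1 : g n ≤ g M := by
        have := hdec (N + M) (N + n) (by omega)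
        exact Submodule.finrank_mono this
      have h2 : g M ≤ g n := hM ▸ hmin n
      exact le_antisymm h1 h2
    -- show K (N + M) = ⊥
    refine ⟨N + M, ?_⟩
    rw [Submodule.eq_bot_iff]
    intro x hx
    by_contra hx0
    obtain ⟨lam, hlam⟩ : ∃ lam : W →ₗ[ZMod p] ZMod p, lam x ≠ 0 := by
      by_contra hall
      push_neg at hall
      exact hx0 ((Module.forall_dual_apply_eq_zero_iff (ZMod p) x).mp hall)
    obtain ⟨n, hn⟩ := h lam
    apply hlam
    apply hn
    -- x ∈ K n : either n ≤ N + M (use hdec) or use stabilization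
    rcases le_or_gt n (N + M) with hle | hlt
    · exact hdec n (N + M) hle hx
    · have : K n = K (N + M) := by
        have := hstab (n - N) (by omega)
        rwa [show N + (n - N) = n by omega] at this
      rw [this]; exact hx
  · classical
    -- Case 2: all K n are infinite dimensional; build a linearly independent sequence.
    push_neg at hfin
    have hex : ∀ (n : ℕ) (t : Finset W), ∃ y ∈ K n, y ∉ Submodule.span (ZMod p) (t : Set W) := by
      intro n t
      by_contra hc
      push_neg at hc
      have hle : K n ≤ Submodule.span (ZMod p) (t : Set W) := fun y hy => hc y hy
      haveI : FiniteDimensional (ZMod p) (Submodule.span (ZMod p) (t : Set W)) :=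
        inferInstance
      exact hfin n (Submodule.finiteDimensional_of_le hle)
    -- recursively build finsets
    choose pick pick_mem pick_nspan using hex
    obtain ⟨F, hF0, hF⟩ : ∃ F : ℕ → Finset W, F 0 = ∅ ∧
        ∀ n, F (n + 1) = insert (pick n (F n)) (F n) :=
      ⟨fun n => Nat.rec (∅ : Finset W) (fun m t => insert (pick m t) t) n, rfl, fun n => rfl⟩
    obtain ⟨x, hx⟩ : ∃ x : ℕ → W, ∀ n, x n = pick n (F n) := ⟨fun n => pick n (F n), fun n => rfl⟩
    have hxK : ∀ n, x n ∈ K n := fun n => (hx n) ▸ pick_mem n (F n)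
    have hmono : ∀ m n, m ≤ n → F m ⊆ F n := by
      intro m n hmn
      induction n with
      | zero => simp_all
      | succ k ih =>
        rcases Nat.lt_or_ge m (k+1) with hlt | hge
        · exact (ih (by omega)).trans (by rw [hF]; exact Finset.subset_insert _ _)
        · have : m = k + 1 := by omega
          subst this; rfl
    have hxF : ∀ n, x n ∈ (F (n + 1) : Set W) := by
      intro n; rw [hF, hx]; exact Finset.mem_insert_self _ _
    -- linear independence of each F n
    have hli : ∀ n, LinearIndependent (ZMod p) ((↑) : ((F n : Finset W) : Set W) → W) := by
      intro n
      induction n with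
      | zero => rw [hF0, Finset.coe_empty]; exact linearIndependent_empty _ _
      | succ k ih =>
        rw [hF, Finset.coe_insert]
        exact LinearIndepOn.insert (v := id) ih (by simpa using pick_nspan k (F k))
    -- independence of the union
    have hdir : Directed (· ⊆ ·) (fun n => (F n : Set W)) := by
      intro m n
      exact ⟨max m n, Finset.coe_subset.mpr (hmono m _ (le_max_left _ _)),
        Finset.coe_subset.mpr (hmono n _ (le_max_right _ _))⟩
    set S : Set W := ⋃ n, (F n : Set W) with hS
    have hliS : LinearIndependent (ZMod p) ((↑) : S → W) :=
      linearIndepOn_iUnion_of_directed (v := id) hdir hli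
    have hxS : ∀ n, x n ∈ S := fun n => Set.mem_iUnion.mpr ⟨n + 1, hxF n⟩
    -- extend to a basis and define a functional equal to 1 on all basis vectors
    let b := Module.Basis.extend hliS
    let lam : W →ₗ[ZMod p] ZMod p := b.constr (ZMod p) (fun _ => (1 : ZMod p))
    have hlam : ∀ n, lam (x n) = 1 := by
      intro n
      have hmem : x n ∈ LinearIndepOn.extend (v := id) hliS (Set.subset_univ S) :=
        LinearIndepOn.subset_extend (v := id) hliS _ (hxS n)
      have : x n = b ⟨x n, hmem⟩ := (Module.Basis.extend_apply_self hliS ⟨x n, hmem⟩).symm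
      rw [this, Module.Basis.constr_basis]
    obtain ⟨n, hn⟩ := h lam
    have := hn (x n) (hxK n)
    rw [hlam n] at this
    exact absurd this one_ne_zero
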